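/- Let T > 0, let x3 : [0,T] → ℝ be measurable and bounded, and let Ξ, ψ : [0,T] → ℝ be essentially bounded measurable functions. For 0 ≤ r ≤ t ≤ T and a bounded measurable θ define I_θ(t,r) := ∫ᵣᵗ x3(s)·exp(∫ᵣˢ θ(u) du) ds. Then for every 0 ≤ r ≤ t ≤ T, the limit lim_{ε→0} (I_{Ξ+ε·ψ}(t,r) − I_Ξ(t,r))/ε exists and equals ∫ᵣᵗ ψ(u)·exp(∫ᵣᵘ Ξ(v) dv)·I_Ξ(t,u) du. -/

import Mathlib

open MeasureTheory intervalIntegral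




lemma msce_swap_aux (g h : ℝ → ℝ) (hg : Measurable g) (hh : Measurable h)
    (r t : ℝ) (hrt : r ≤ t) (Mg Mh : ℝ) (hMg : 0 ≤ Mg) (hMh : 0 ≤ Mh)
    (hgb : ∀ s ∈ Set.Ioc r t, |g s| ≤ Mg) (hhb : ∀ s ∈ Set.Ioc r t, |h s| ≤ Mh) :
    (∫ s in r..t, g s * ∫ u in r..s, h u) = ∫ u in r..t, h u * ∫ s in u..t, g s := by
  set μ := volume.restrict (Set.Ioc r t) with hμ
  set k : ℝ → ℝ → ℝ := fun s u => if u ≤ s then g s * h u else 0 with hk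
  have kmeas : Measurable (Function.uncurry k) := by
    apply Measurable.ite (measurableSet_le measurable_snd measurable_fst)
    · exact (hg.comp measurable_fst).mul (hh.comp measurable_snd)
    · exact measurable_const
  have kint : Integrable (Function.uncurry k) (μ.prod μ) := by
    refine Integrable.mono' (integrable_const (Mg * Mh)) kmeas.aestronglyMeasurable ?_
    have hprod : μ.prod μ = (volume.prod volume).restrict ((Set.Ioc r t) ×ˢ (Set.Ioc r t)) := by
      rw [hμ, Measure.prod_restrict]
    rw [hprod]
    filter_upwards [ae_restrict_mem (measurableSet_Ioc.prod measurableSet_Ioc)] with p hp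
    rcases hp with ⟨hp1, hp2⟩
    simp only [Function.uncurry, hk]
    split_ifs
    · rw [Real.norm_eq_abs, abs_mul]
      exact mul_le_mul (hgb _ hp1) (hhb _ hp2) (abs_nonneg _) hMg
    · simpa using mul_nonneg hMg hMh
  have swap := integral_integral_swap (f := k) (μ := μ) (ν := μ) kint
  have hL : (∫ s in r..t, g s * ∫ u in r..s, h u) = ∫ s, ∫ u, k s u ∂μ ∂μ := by
    rw [intervalIntegral.integral_of_le hrt]
    apply setIntegral_congr_fun measurableSet_Ioc
    intro s hs
    have h1 : ∀ u, k s u = Set.indicator (Set.Iic s) (fun u => g s * h u) u := by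
      intro u; simp [hk, Set.indicator_apply, Set.mem_Iic]
    simp_rw [h1]
    rw [setIntegral_indicator measurableSet_Iic, Set.Ioc_inter_Iic, min_eq_right hs.2,
      MeasureTheory.integral_const_mul, intervalIntegral.integral_of_le hs.1.le]
  have hR : (∫ u in r..t, h u * ∫ s in u..t, g s) = ∫ u, ∫ s, k s u ∂μ ∂μ := by
    rw [intervalIntegral.integral_of_le hrt]
    apply setIntegral_congr_fun measurableSet_Ioc
    intro u hu
    have h1 : ∀ s, k s u = Set.indicator (Set.Ici u) (fun s => g s * h u) s := by
      intro s; simp [hk, Set.indicator_apply, Set.mem_Ici]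
    simp_rw [h1]
    rw [setIntegral_indicator measurableSet_Ici]
    have h2 : Set.Ioc r t ∩ Set.Ici u = Set.Icc u t :=
      Set.ext fun x => ⟨fun ⟨⟨_, hx2⟩, hx3⟩ => ⟨hx3, hx2⟩,
        fun ⟨hx1, hx2⟩ => ⟨⟨lt_of_lt_of_le hu.1 hx1, hx2⟩, hx1⟩⟩
    rw [h2, integral_Icc_eq_integral_Ioc, MeasureTheory.integral_mul_const,
      intervalIntegral.integral_of_le hu.2, mul_comm]
  rw [hL, hR, swap]



lemma msce_intervalIntegrable_of_bdd {f : ℝ → ℝ} (hf : Measurable f) {M : ℝ}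
    (h : ∀ x, |f x| ≤ M) (a b : ℝ) : IntervalIntegrable f volume a b := by
  refine _root_.intervalIntegrable_const (c := M) |>.mono_fun hf.aestronglyMeasurable ?_
  exact Filter.Eventually.of_forall fun x => by
    simpa [Real.norm_eq_abs] using (h x).trans (le_abs_self M)

lemma msce_intervalIntegrable_of_bdd' {f : ℝ → ℝ} (hf : Measurable f) {a b M : ℝ}
    (h : ∀ x ∈ Set.uIoc a b, |f x| ≤ M) : IntervalIntegrable f volume a b := by
  refine _root_.intervalIntegrable_const (c := M) |>.mono_fun hf.aestronglyMeasurable ?_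
  filter_upwards [ae_restrict_mem measurableSet_uIoc] with x hx
  simpa [Real.norm_eq_abs] using (h x hx).trans (le_abs_self M)

lemma msce_gateaux_aux (x3 Ξ ψ : ℝ → ℝ)
    (hx3m : Measurable x3) (hΞm : Measurable Ξ) (hψm : Measurable ψ)
    (M3 MΞ Mψ : ℝ) (hM3 : 0 ≤ M3) (hMΞ : 0 ≤ MΞ) (hMψ : 0 ≤ Mψ)
    (hx3b : ∀ u, |x3 u| ≤ M3) (hΞb : ∀ u, |Ξ u| ≤ MΞ) (hψb : ∀ u, |ψ u| ≤ Mψ)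
    (r t : ℝ) (hrt : r ≤ t) :
    HasDerivAt
      (fun ε : ℝ => ∫ s in r..t, x3 s * Real.exp (∫ u in r..s, (Ξ u + ε * ψ u)))
      (∫ u in r..t, ψ u * Real.exp (∫ v in r..u, Ξ v) *
        (∫ s in u..t, x3 s * Real.exp (∫ v in u..s, Ξ v))) 0 := by
  have hΞi : ∀ a b : ℝ, IntervalIntegrable Ξ volume a b :=
    msce_intervalIntegrable_of_bdd hΞm hΞb
  have hψi : ∀ a b : ℝ, IntervalIntegrable ψ volume a b :=
    msce_intervalIntegrable_of_bdd hψm hψb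
  set A : ℝ → ℝ := fun s => ∫ u in r..s, Ξ u with hA
  set B : ℝ → ℝ := fun s => ∫ u in r..s, ψ u with hB
  have hAcont : Continuous A := intervalIntegral.continuous_primitive hΞi r
  have hBcont : Continuous B := intervalIntegral.continuous_primitive hψi r
  have hrw : ∀ (ε s : ℝ), (∫ u in r..s, (Ξ u + ε * ψ u)) = A s + ε * B s := by
    intro ε s
    rw [intervalIntegral.integral_add (hΞi r s) ((hψi r s).const_mul ε),
      intervalIntegral.integral_const_mul]
  -- bounds on A and B on [r, t]
  have hAb : ∀ s ∈ Set.Ioc r t, |A s| ≤ MΞ * (t - r) := by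
    intro s hs
    have h1 : |A s| ≤ MΞ * |s - r| := by
      simpa [Real.norm_eq_abs] using
        intervalIntegral.norm_integral_le_of_norm_le_const
          (C := MΞ) (f := Ξ) (a := r) (b := s)
          (fun u _ => by simpa [Real.norm_eq_abs] using hΞb u)
    refine h1.trans (mul_le_mul_of_nonneg_left ?_ hMΞ)
    rw [abs_of_nonneg (by linarith [hs.1.le])]
    linarith [hs.2]
  have hBb : ∀ s ∈ Set.Ioc r t, |B s| ≤ Mψ * (t - r) := by
    intro s hs
    have h1 : |B s| ≤ Mψ * |s - r| := by
      simpa [Real.norm_eq_abs] using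
        intervalIntegral.norm_integral_le_of_norm_le_const
          (C := Mψ) (f := ψ) (a := r) (b := s)
          (fun u _ => by simpa [Real.norm_eq_abs] using hψb u)
    refine h1.trans (mul_le_mul_of_nonneg_left ?_ hMψ)
    rw [abs_of_nonneg (by linarith [hs.1.le])]
    linarith [hs.2]
  have htr : (0:ℝ) ≤ t - r := by linarith
  set C : ℝ := M3 * (Real.exp (MΞ * (t - r) + Mψ * (t - r)) * (Mψ * (t - r))) with hC
  have hIoc : Set.uIoc r t = Set.Ioc r t := Set.uIoc_of_le hrt
  -- differentiation under the integral sign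
  have main := intervalIntegral.hasDerivAt_integral_of_dominated_loc_of_deriv_le
    (μ := volume) (a := r) (b := t) (x₀ := (0:ℝ)) (s := Metric.ball (0:ℝ) 1)
    (F := fun x s => x3 s * Real.exp (A s + x * B s))
    (F' := fun x s => x3 s * (Real.exp (A s + x * B s) * B s))
    (bound := fun _ => C) (Metric.ball_mem_nhds (0:ℝ) one_pos)
    (Filter.Eventually.of_forall fun x =>
      (hx3m.mul (Real.continuous_exp.comp
        (hAcont.add (continuous_const.mul hBcont))).measurable).aestronglyMeasurable)
    (msce_intervalIntegrable_of_bdd'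
      (hx3m.mul (Real.continuous_exp.comp
        (hAcont.add (continuous_const.mul hBcont))).measurable)
      (M := M3 * Real.exp (MΞ * (t - r) + Mψ * (t - r)))
      (fun s hs => by
        rw [Set.uIoc_of_le hrt] at hs
        simp only [Pi.mul_apply, Pi.add_apply, Function.comp_apply]
        rw [abs_mul]
        refine mul_le_mul (hx3b s) ?_ (abs_nonneg _) hM3
        simp only [Function.comp_apply, zero_mul, add_zero, abs_of_pos (Real.exp_pos _)]
        exact Real.exp_le_exp.mpr (((le_abs_self _).trans (hAb s hs)).trans
          (by nlinarith [Real.exp_pos (MΞ * (t - r)), mul_nonneg hMψ htr]))))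
    ((hx3m.mul ((Real.continuous_exp.comp
        (hAcont.add (continuous_const.mul hBcont))).measurable.mul
        hBcont.measurable)).aestronglyMeasurable)
    (Filter.Eventually.of_forall fun s hs x hx => by
      rw [hIoc] at hs
      have hxb : |x| ≤ 1 := by
        have := Metric.mem_ball.mp hx
        simp only [Real.dist_eq, sub_zero] at this
        linarith
      have hexp : Real.exp (A s + x * B s) ≤ Real.exp (MΞ * (t - r) + Mψ * (t - r)) := by
        apply Real.exp_le_exp.mpr
        have h1 : A s + x * B s ≤ |A s| + |x| * |B s| := by
          calc A s + x * B s ≤ |A s + x * B s| := le_abs_self _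
            _ ≤ |A s| + |x * B s| := abs_add_le _ _
            _ = |A s| + |x| * |B s| := by rw [abs_mul]
        refine h1.trans ?_
        have h2 : |x| * |B s| ≤ 1 * (Mψ * (t - r)) :=
          mul_le_mul hxb (hBb s hs) (abs_nonneg _) zero_le_one
        have := hAb s hs
        linarith [h2]
      rw [Real.norm_eq_abs, abs_mul, abs_mul]
      calc |x3 s| * (|Real.exp (A s + x * B s)| * |B s|)
          ≤ M3 * (Real.exp (MΞ * (t - r) + Mψ * (t - r)) * (Mψ * (t - r))) := by
            apply mul_le_mul (hx3b s) _ (mul_nonneg (abs_nonneg _) (abs_nonneg _)) hM3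
            rw [abs_of_pos (Real.exp_pos _)]
            exact mul_le_mul hexp (hBb s hs) (abs_nonneg _) (Real.exp_pos _).le
        _ = C := rfl)
    (_root_.intervalIntegrable_const)
    (Filter.Eventually.of_forall fun s hs x hx => by
      have h1 : HasDerivAt (fun y : ℝ => A s + y * B s) (B s) x :=
        (hasDerivAt_mul_const (B s)).const_add (A s)
      exact (h1.exp).const_mul (x3 s))
  obtain ⟨-, hder⟩ := main
  -- rewrite the function being differentiated
  have hfun : (fun ε : ℝ => ∫ s in r..t, x3 s * Real.exp (∫ u in r..s, (Ξ u + ε * ψ u)))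
      = fun x : ℝ => ∫ s in r..t, x3 s * Real.exp (A s + x * B s) := by
    funext ε
    simp only [hrw]
  rw [hfun]
  -- identify the derivative value
  refine hder.congr_deriv ?_
  set g : ℝ → ℝ := fun s => x3 s * Real.exp (A s) with hg
  have hgm : Measurable g := hx3m.mul (Real.continuous_exp.comp hAcont).measurable
  have hD1 : (∫ u in r..t, ψ u * Real.exp (∫ v in r..u, Ξ v) *
      (∫ s in u..t, x3 s * Real.exp (∫ v in u..s, Ξ v)))
      = ∫ u in r..t, ψ u * ∫ s in u..t, g s := by
    apply intervalIntegral.integral_congr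
    intro u _
    show ψ u * Real.exp (A u) * (∫ s in u..t, x3 s * Real.exp (∫ v in u..s, Ξ v))
      = ψ u * ∫ s in u..t, g s
    have hinner : Real.exp (A u) * (∫ s in u..t, x3 s * Real.exp (∫ v in u..s, Ξ v))
        = ∫ s in u..t, g s := by
      rw [← intervalIntegral.integral_const_mul]
      apply intervalIntegral.integral_congr
      intro s _
      have hadd : A u + (∫ v in u..s, Ξ v) = A s :=
        intervalIntegral.integral_add_adjacent_intervals (hΞi r u) (hΞi u s)
      calc Real.exp (A u) * (x3 s * Real.exp (∫ v in u..s, Ξ v))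
          = x3 s * (Real.exp (A u) * Real.exp (∫ v in u..s, Ξ v)) := by ring
        _ = x3 s * Real.exp (A u + ∫ v in u..s, Ξ v) := by rw [Real.exp_add]
        _ = g s := by rw [hadd]
    rw [mul_assoc, hinner]
  rw [hD1]
  have hswap := msce_swap_aux g ψ hgm hψm r t hrt
    (M3 * Real.exp (MΞ * (t - r))) Mψ
    (mul_nonneg hM3 (Real.exp_pos _).le) hMψ
    (fun s hs => by
      rw [hg]
      simp only [abs_mul]
      apply mul_le_mul (hx3b s) _ (abs_nonneg _) hM3
      rw [abs_of_pos (Real.exp_pos _)]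
      exact Real.exp_le_exp.mpr ((le_abs_self _).trans (hAb s hs)))
    (fun s _ => hψb s)
  rw [← hswap]
  apply intervalIntegral.integral_congr
  intro s _
  simp [hg, B]
  ring
/-- Gâteaux derivative of the inner Volterra integral
`I_θ(t,r) = ∫_r^t x3(s) exp(∫_r^s θ)` of the MSCE-T kernel with respect to
its exponent, in direction `ψ`:
`δI(t,r) = ∫_r^t ψ(u) e^{∫_r^u Ξ} I_Ξ(t,u) du`. -/
theorem msce_kernel_gateaux
    (T : ℝ) (hT : 0 < T) (x3 Ξ ψ : ℝ → ℝ)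
    (hx3m : Measurable x3) (hx3b : ∃ M, ∀ t ∈ Set.Icc (0 : ℝ) T, |x3 t| ≤ M)
    (hΞm : Measurable Ξ) (hΞb : ∃ M, ∀ t ∈ Set.Icc (0 : ℝ) T, |Ξ t| ≤ M)
    (hψm : Measurable ψ) (hψb : ∃ M, ∀ t ∈ Set.Icc (0 : ℝ) T, |ψ t| ≤ M) :
    ∀ r t : ℝ, 0 ≤ r → r ≤ t → t ≤ T →
      HasDerivAt
        (fun ε : ℝ => ∫ s in r..t, x3 s * Real.exp (∫ u in r..s, (Ξ u + ε * ψ u)))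
        (∫ u in r..t, ψ u * Real.exp (∫ v in r..u, Ξ v) *
          (∫ s in u..t, x3 s * Real.exp (∫ v in u..s, Ξ v)))
        0 := by
  intro r t hr hrt htT
  obtain ⟨M3, hM3⟩ := hx3b
  obtain ⟨MΞ, hMΞ⟩ := hΞb
  obtain ⟨Mψ, hMψ⟩ := hψb
  set x3' : ℝ → ℝ := (Set.Icc (0:ℝ) T).indicator x3 with hx3'
  set Ξ' : ℝ → ℝ := (Set.Icc (0:ℝ) T).indicator Ξ with hΞ'
  set ψ' : ℝ → ℝ := (Set.Icc (0:ℝ) T).indicator ψ with hψ'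
  have hb3 : ∀ u, |x3' u| ≤ max M3 0 := by
    intro u; by_cases h : u ∈ Set.Icc (0:ℝ) T
    · rw [hx3', Set.indicator_of_mem h]; exact (hM3 u h).trans (le_max_left _ _)
    · rw [hx3', Set.indicator_of_notMem h]; simp
  have hbΞ : ∀ u, |Ξ' u| ≤ max MΞ 0 := by
    intro u; by_cases h : u ∈ Set.Icc (0:ℝ) T
    · rw [hΞ', Set.indicator_of_mem h]; exact (hMΞ u h).trans (le_max_left _ _)
    · rw [hΞ', Set.indicator_of_notMem h]; simp
  have hbψ : ∀ u, |ψ' u| ≤ max Mψ 0 := by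
    intro u; by_cases h : u ∈ Set.Icc (0:ℝ) T
    · rw [hψ', Set.indicator_of_mem h]; exact (hMψ u h).trans (le_max_left _ _)
    · rw [hψ', Set.indicator_of_notMem h]; simp
  have key := msce_gateaux_aux x3' Ξ' ψ'
    (hx3m.indicator measurableSet_Icc) (hΞm.indicator measurableSet_Icc)
    (hψm.indicator measurableSet_Icc)
    (max M3 0) (max MΞ 0) (max Mψ 0) (le_max_right _ _) (le_max_right _ _)
    (le_max_right _ _) hb3 hbΞ hbψ r t hrt
  have hsub : ∀ {a b : ℝ}, r ≤ a → a ≤ b → b ≤ t → Set.uIcc a b ⊆ Set.Icc (0:ℝ) T := by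
    intro a b h1 h2 h3
    rw [Set.uIcc_of_le h2]
    intro x hx
    exact ⟨hr.trans (h1.trans hx.1), hx.2.trans (h3.trans htT)⟩
  have hΞeq : ∀ {a b : ℝ}, r ≤ a → a ≤ b → b ≤ t →
      (∫ v in a..b, Ξ' v) = ∫ v in a..b, Ξ v := by
    intro a b h1 h2 h3
    apply intervalIntegral.integral_congr
    intro v hv
    exact Set.indicator_of_mem (hsub h1 h2 h3 hv) Ξ
  have hfun : (fun ε : ℝ => ∫ s in r..t, x3' s * Real.exp (∫ u in r..s, (Ξ' u + ε * ψ' u)))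
      = fun ε : ℝ => ∫ s in r..t, x3 s * Real.exp (∫ u in r..s, (Ξ u + ε * ψ u)) := by
    funext ε
    apply intervalIntegral.integral_congr
    intro s hs
    beta_reduce
    rw [Set.uIcc_of_le hrt] at hs
    have h1 : x3' s = x3 s :=
      Set.indicator_of_mem (hsub hs.1 le_rfl hs.2 (by rw [Set.uIcc_of_le le_rfl]; simp)) x3
    have h2 : (∫ u in r..s, (Ξ' u + ε * ψ' u)) = ∫ u in r..s, (Ξ u + ε * ψ u) := by
      apply intervalIntegral.integral_congr
      intro u hu
      have hmem := hsub le_rfl hs.1 hs.2 hu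
      simp only [hΞ', hψ', Set.indicator_of_mem hmem]
    rw [h1, h2]
  have hval : (∫ u in r..t, ψ' u * Real.exp (∫ v in r..u, Ξ' v) *
        (∫ s in u..t, x3' s * Real.exp (∫ v in u..s, Ξ' v)))
      = ∫ u in r..t, ψ u * Real.exp (∫ v in r..u, Ξ v) *
        (∫ s in u..t, x3 s * Real.exp (∫ v in u..s, Ξ v)) := by
    apply intervalIntegral.integral_congr
    intro u hu
    beta_reduce
    rw [Set.uIcc_of_le hrt] at hu
    have h1 : ψ' u = ψ u :=
      Set.indicator_of_mem (hsub hu.1 le_rfl hu.2 (by rw [Set.uIcc_of_le le_rfl]; simp)) ψ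
    have h2 := hΞeq le_rfl hu.1 hu.2
    have h3 : (∫ s in u..t, x3' s * Real.exp (∫ v in u..s, Ξ' v))
        = ∫ s in u..t, x3 s * Real.exp (∫ v in u..s, Ξ v) := by
      apply intervalIntegral.integral_congr
      intro s hs
      beta_reduce
      rw [Set.uIcc_of_le hu.2] at hs
      have h4 : x3' s = x3 s :=
        Set.indicator_of_mem (hsub (hu.1.trans hs.1) le_rfl hs.2
          (by rw [Set.uIcc_of_le le_rfl]; simp)) x3
      rw [h4, hΞeq hu.1 hs.1 hs.2]
    rw [h1, h2, h3]
  rw [← hfun, ← hval]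
  exact key
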